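/- Let A be an abelian group written multiplicatively, v, m ∈ A, and φ = p/q with p ∈ ℤ, q ≥ 1, gcd(p,q) = 1. On the Landau-gauge magnetic translation group U(1)⋉_φℤ², represent each U(1)-component by z ∈ [0,1) and define 𝔴(g₁,g₂) = v^{z₁ + z₂ + φ x₁ y₂ − z₁₂} · m^{x₁ y₂}, where z₁₂ ∈ [0,1) is the representative of the U(1)-component of g₁g₂ (so the exponent of v is an integer). Then (i) 𝔴 is an A-valued 2-cocycle on U(1)⋉_φℤ², and (ii) for the pure translations g₁ = (0,(q,0)) and g₂ = (0,(0,1)), which span a q×1 magnetic unit cell, one has 𝔴(g₁,g₂)·𝔴(g₂,g₁)^{-1} = v^p · m^q. -/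
import Mathlib


noncomputable section

/-- The underlying set `(ℝ/ℤ) × ℤ²` of the magnetic translation group. -/
abbrev MagTrans : Type := AddCircle (1 : ℝ) × (Fin 2 → ℤ)

/-- Landau-gauge magnetic translation multiplication with flux `φ` per unit cell:
`(z₁,r₁)·(z₂,r₂) = (z₁ + z₂ + φ x₁ y₂ mod 1, r₁ + r₂)`. -/
def magMulL (φ : ℝ) (g₁ g₂ : MagTrans) : MagTrans :=
  (g₁.1 + g₂.1 + (↑(φ * (g₁.2 0 : ℝ) * (g₂.2 1 : ℝ)) : AddCircle (1 : ℝ)), g₁.2 + g₂.2)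

/-- The representative in `[0,1)` of an element of `ℝ/ℤ`. -/
def rep1 (z : AddCircle (1 : ℝ)) : ℝ :=
  haveI : Fact ((0 : ℝ) < 1) := ⟨one_pos⟩
  (AddCircle.equivIco 1 0 z : ℝ)

/-- The integer exponent of the vison `v` in the symmetry fractionalization cocycle. -/
def expV (φ : ℝ) (g₁ g₂ : MagTrans) : ℤ :=
  ⌊rep1 g₁.1 + rep1 g₂.1 + φ * (g₁.2 0 : ℝ) * (g₂.2 1 : ℝ)⌋

/-- The symmetry fractionalization cochain `𝔴(g₁,g₂) = v^{z₁+z₂+φx₁y₂−z₁₂} · m^{x₁y₂}`. -/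
def wVM {A : Type*} [CommGroup A] (v m : A) (φ : ℝ) (g₁ g₂ : MagTrans) : A :=
  v ^ expV φ g₁ g₂ * m ^ (g₁.2 0 * g₂.2 1)

lemma rep1_coe (x : ℝ) : rep1 (↑x) = Int.fract x := by
  haveI : Fact ((0 : ℝ) < 1) := ⟨one_pos⟩
  have h := AddCircle.coe_equivIco_mk_apply (1 : ℝ) x
  simp only [div_one, mul_one] at h
  exact h

lemma coe_rep1 (z : AddCircle (1 : ℝ)) : ((rep1 z : ℝ) : AddCircle (1 : ℝ)) = z := by
  haveI : Fact ((0 : ℝ) < 1) := ⟨one_pos⟩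
  exact (AddCircle.equivIco 1 0).symm_apply_apply z

lemma rep1_magMulL (φ : ℝ) (g₁ g₂ : MagTrans) :
    rep1 (magMulL φ g₁ g₂).1 =
      Int.fract (rep1 g₁.1 + rep1 g₂.1 + φ * (g₁.2 0 : ℝ) * (g₂.2 1 : ℝ)) := by
  have h : (magMulL φ g₁ g₂).1 =
      ((rep1 g₁.1 + rep1 g₂.1 + φ * (g₁.2 0 : ℝ) * (g₂.2 1 : ℝ) : ℝ) : AddCircle (1 : ℝ)) := by
    simp only [magMulL]
    rw [QuotientAddGroup.mk_add, QuotientAddGroup.mk_add, coe_rep1, coe_rep1]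
  rw [h, rep1_coe]

lemma expV_eq (φ : ℝ) (g₁ g₂ : MagTrans) :
    (expV φ g₁ g₂ : ℝ) =
      rep1 g₁.1 + rep1 g₂.1 + φ * (g₁.2 0 : ℝ) * (g₂.2 1 : ℝ) -
        rep1 (magMulL φ g₁ g₂).1 := by
  rw [rep1_magMulL, expV, Int.self_sub_fract]

lemma fract_left (a b c : ℝ) : Int.fract (Int.fract a + b + c) = Int.fract (a + b + c) := by
  rw [show Int.fract a + b + c = a + b + c - ⌊a⌋ by rw [Int.fract]; ring, Int.fract_sub_intCast]

lemma fract_mid (a b c : ℝ) : Int.fract (a + Int.fract b + c) = Int.fract (a + b + c) := by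
  rw [show a + Int.fract b + c = a + b + c - ⌊b⌋ by rw [Int.fract]; ring, Int.fract_sub_intCast]

lemma combine {A : Type*} [CommGroup A] (v m : A) (a b c d e f g h : ℤ)
    (hv : a - b + c - d = 0) (hm : e - f + g - h = 0) :
    (v ^ a * m ^ e) * (v ^ b * m ^ f)⁻¹ * (v ^ c * m ^ g) * (v ^ d * m ^ h)⁻¹ = 1 := by
  have key : (v ^ a * m ^ e) * (v ^ b * m ^ f)⁻¹ * (v ^ c * m ^ g) * (v ^ d * m ^ h)⁻¹
      = v ^ (a - b + c - d) * m ^ (e - f + g - h) := by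
    simp only [zpow_sub, zpow_add, mul_inv]
    ac_rfl
  rw [key, hv, hm, zpow_zero, zpow_zero, one_mul]

/-- For flux `φ = p/q`, the exponent of `v` is the integer
`z₁ + z₂ + φ x₁ y₂ − z₁₂`, `𝔴` is an `A`-valued 2-cocycle, and for the pure translations
`(q,0)` and `(0,1)` spanning a `q×1` magnetic unit cell,
`𝔴(g₁,g₂)·𝔴(g₂,g₁)⁻¹ = v^p · m^q`. -/
theorem magnetic_unit_cell_anyon {A : Type*} [CommGroup A] (v m : A) (p : ℤ) (q : ℕ)
    (hq : 1 ≤ q) (hpq : Int.gcd p (q : ℤ) = 1) :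
    (∀ g₁ g₂ : MagTrans,
      (expV ((p : ℝ) / (q : ℝ)) g₁ g₂ : ℝ) =
        rep1 g₁.1 + rep1 g₂.1 + (p : ℝ) / (q : ℝ) * (g₁.2 0 : ℝ) * (g₂.2 1 : ℝ) -
          rep1 (magMulL ((p : ℝ) / (q : ℝ)) g₁ g₂).1) ∧
    (∀ g₁ g₂ g₃ : MagTrans,
      wVM v m ((p : ℝ) / (q : ℝ)) g₂ g₃ *
          (wVM v m ((p : ℝ) / (q : ℝ)) (magMulL ((p : ℝ) / (q : ℝ)) g₁ g₂) g₃)⁻¹ *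
          wVM v m ((p : ℝ) / (q : ℝ)) g₁ (magMulL ((p : ℝ) / (q : ℝ)) g₂ g₃) *
          (wVM v m ((p : ℝ) / (q : ℝ)) g₁ g₂)⁻¹ = 1) ∧
    (wVM v m ((p : ℝ) / (q : ℝ)) (0, ![(q : ℤ), 0]) (0, ![0, 1]) *
        (wVM v m ((p : ℝ) / (q : ℝ)) (0, ![0, 1]) (0, ![(q : ℤ), 0]))⁻¹ =
      v ^ p * m ^ (q : ℤ)) := by
  set φ : ℝ := (p : ℝ) / (q : ℝ) with hφ
  have hq0 : (q : ℝ) ≠ 0 := Nat.cast_ne_zero.mpr (by omega)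
  refine ⟨fun g₁ g₂ => expV_eq φ g₁ g₂, ?_, ?_⟩
  · intro g₁ g₂ g₃
    have hrep : rep1 (magMulL φ (magMulL φ g₁ g₂) g₃).1
        = rep1 (magMulL φ g₁ (magMulL φ g₂ g₃)).1 := by
      rw [rep1_magMulL, rep1_magMulL, rep1_magMulL, rep1_magMulL, fract_left, fract_mid]
      congr 1
      simp only [magMulL, Pi.add_apply, Int.cast_add]
      ring
    have hv : expV φ g₂ g₃ - expV φ (magMulL φ g₁ g₂) g₃ +
        expV φ g₁ (magMulL φ g₂ g₃) - expV φ g₁ g₂ = 0 := by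
      have hcast : ((expV φ g₂ g₃ - expV φ (magMulL φ g₁ g₂) g₃ +
          expV φ g₁ (magMulL φ g₂ g₃) - expV φ g₁ g₂ : ℤ) : ℝ) = 0 := by
        push_cast
        rw [expV_eq, expV_eq, expV_eq, expV_eq, hrep]
        simp only [magMulL, Pi.add_apply, Int.cast_add]
        ring
      exact_mod_cast hcast
    have hm : g₂.2 0 * g₃.2 1 - (magMulL φ g₁ g₂).2 0 * g₃.2 1 +
        g₁.2 0 * (magMulL φ g₂ g₃).2 1 - g₁.2 0 * g₂.2 1 = 0 := by
      simp only [magMulL, Pi.add_apply]; ring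
    simpa only [wVM] using combine v m _ _ _ _ _ _ _ _ hv hm
  · have hr0 : rep1 (0 : AddCircle (1 : ℝ)) = 0 := by
      have h0 : ((0 : ℝ) : AddCircle (1 : ℝ)) = 0 := by norm_num
      rw [← h0, rep1_coe, Int.fract_zero]
    have e1 : expV φ ((0, ![(q : ℤ), 0]) : MagTrans) (0, ![0, 1]) = p := by
      simp only [expV, hr0, Matrix.cons_val_zero, Matrix.cons_val_one, Matrix.head_cons]
      push_cast
      rw [zero_add, zero_add, mul_one, div_mul_cancel₀ _ hq0]
      exact Int.floor_intCast p
    have e2 : expV φ ((0, ![0, 1]) : MagTrans) (0, ![(q : ℤ), 0]) = 0 := by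
      simp [expV, hr0]
    simp only [wVM, e1, e2, Matrix.cons_val_zero, Matrix.cons_val_one, Matrix.head_cons]
    norm_num
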